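/- In the fundamental group of the Klein bottle, presented as ⟨a, b | a b a b⁻¹ = 1⟩ (equivalently b a b⁻¹ = a⁻¹), every cyclic normal subgroup is either trivial, equal to ⟨aᵏ⟩ for some positive integer k, or equal to ⟨b^{2k}⟩ for some positive integer k. -/

import Mathlib

/-- The Klein bottle group `⟨a, b | b a b⁻¹ = a⁻¹⟩`, i.e. `⟨a, b | b a b⁻¹ a = 1⟩`. -/
def kleinRels : Set (FreeGroup (Fin 2)) :=
  {FreeGroup.of 1 * FreeGroup.of 0 * (FreeGroup.of 1)⁻¹ * FreeGroup.of 0}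

/-- The fundamental group of the Klein bottle. -/
abbrev KleinBottleGroup : Type := PresentedGroup kleinRels

/-- The generator `a` of the Klein bottle group. -/
def kleinA : KleinBottleGroup := PresentedGroup.of 0

/-- The generator `b` of the Klein bottle group. -/
def kleinB : KleinBottleGroup := PresentedGroup.of 1


open Multiplicative SemidirectProduct

def kleinPhi : Multiplicative ℤ →* MulAut (Multiplicative ℤ) :=
  zpowersHom _ (MulEquiv.inv (Multiplicative ℤ))

abbrev KModel : Type := SemidirectProduct (Multiplicative ℤ) (Multiplicative ℤ) kleinPhi

lemma inv_sq_eq_one : (MulEquiv.inv (Multiplicative ℤ)) ^ 2 = 1 := by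
  ext x
  simp [sq]

lemma kleinPhi_even (k : ℤ) : kleinPhi (ofAdd (2 * k)) = 1 := by
  rw [kleinPhi, zpowersHom_apply, toAdd_ofAdd, zpow_mul]
  norm_cast
  rw [inv_sq_eq_one, one_zpow]

lemma kleinPhi_odd (k : ℤ) : kleinPhi (ofAdd (2 * k + 1)) = MulEquiv.inv (Multiplicative ℤ) := by
  rw [kleinPhi, zpowersHom_apply, toAdd_ofAdd, zpow_add, zpow_mul]
  norm_cast
  rw [inv_sq_eq_one, one_zpow, one_mul, pow_one]

lemma klein_rel : kleinB * kleinA * kleinB⁻¹ * kleinA = 1 := by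
  have h : (PresentedGroup.mk kleinRels)
      (FreeGroup.of 1 * FreeGroup.of 0 * (FreeGroup.of 1)⁻¹ * FreeGroup.of 0) = 1 := by
    rw [show ((PresentedGroup.mk kleinRels) (FreeGroup.of 1 * FreeGroup.of 0 *
      (FreeGroup.of 1)⁻¹ * FreeGroup.of 0) = 1) ↔ _ from QuotientGroup.eq_one_iff _]
    exact Subgroup.subset_normalClosure (by simp [kleinRels])
  simpa [kleinA, kleinB, PresentedGroup.of, map_mul, map_inv] using h

lemma klein_BAB : kleinB * kleinA * kleinB⁻¹ = kleinA⁻¹ := by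
  have := klein_rel
  rw [mul_eq_one_iff_eq_inv] at this
  exact this

lemma klein_conjB (s : ℤ) : kleinB * kleinA ^ s * kleinB⁻¹ = kleinA ^ (-s) := by
  have h : (MulAut.conj kleinB) (kleinA ^ s) = ((MulAut.conj kleinB) kleinA) ^ s := map_zpow _ _ _
  simp only [MulAut.conj_apply] at h
  rw [h, klein_BAB, inv_zpow, ← zpow_neg]

lemma klein_comm2 : Commute kleinA (kleinB ^ (2:ℤ)) := by
  have h1 : kleinB * kleinA⁻¹ * kleinB⁻¹ = kleinA := by
    have := klein_conjB (-1)
    simpa using this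
  unfold Commute SemiconjBy
  have : kleinB ^ (2:ℤ) * kleinA * (kleinB ^ (2:ℤ))⁻¹ = kleinA := by
    rw [show (2:ℤ) = 1 + 1 by norm_num, zpow_add, zpow_one, mul_inv_rev]
    calc kleinB * kleinB * kleinA * (kleinB⁻¹ * kleinB⁻¹)
        = kleinB * (kleinB * kleinA * kleinB⁻¹) * kleinB⁻¹ := by group
      _ = kleinB * kleinA⁻¹ * kleinB⁻¹ := by rw [klein_BAB]
      _ = kleinA := h1
  calc kleinA * kleinB ^ (2:ℤ) = (kleinB ^ (2:ℤ) * kleinA * (kleinB ^ (2:ℤ))⁻¹) * kleinB ^ (2:ℤ) := by rw [this]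
    _ = kleinB ^ (2:ℤ) * kleinA := by group

lemma klein_conjB2k (k s : ℤ) : kleinB ^ (2 * k) * kleinA ^ s * (kleinB ^ (2 * k))⁻¹ = kleinA ^ s := by
  have h : Commute (kleinA ^ s) (kleinB ^ (2 * k)) := by
    have := (klein_comm2.zpow_right k).zpow_left s
    rwa [← zpow_mul] at this
  rw [← h.eq, mul_inv_cancel_right]

lemma klein_conjB_gen (t s : ℤ) :
    kleinB ^ t * kleinA ^ s * (kleinB ^ t)⁻¹ = kleinA ^ (toAdd (kleinPhi (ofAdd t) (ofAdd s))) := by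
  rcases Int.even_or_odd t with ⟨k, hk⟩ | ⟨k, hk⟩
  · subst hk
    rw [show k + k = 2 * k by ring] at *
    rw [kleinPhi_even, MulAut.one_apply, toAdd_ofAdd, klein_conjB2k]
  · subst hk
    rw [kleinPhi_odd]
    have : toAdd ((MulEquiv.inv (Multiplicative ℤ)) (ofAdd s)) = -s := by simp
    rw [this, zpow_add, zpow_one, mul_inv_rev, ← klein_conjB2k k (-s), ← klein_conjB s]
    group

def kleinF : Fin 2 → KModel := ![inl (ofAdd 1), inr (ofAdd 1)]

lemma kleinF_rels : ∀ r ∈ kleinRels, FreeGroup.lift kleinF r = 1 := by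
  intro r hr
  rw [kleinRels, Set.mem_singleton_iff] at hr
  subst hr
  simp only [map_mul, map_inv, FreeGroup.lift_apply_of, kleinF]
  ext
  · simp [kleinPhi]
    rfl
  · simp

def toK : KleinBottleGroup →* KModel := PresentedGroup.toGroup kleinF_rels

lemma toK_A : toK kleinA = inl (ofAdd 1) := PresentedGroup.toGroup.of kleinF_rels
lemma toK_B : toK kleinB = inr (ofAdd 1) := PresentedGroup.toGroup.of kleinF_rels

lemma fromK_h : ∀ g : Multiplicative ℤ,
    (zpowersHom KleinBottleGroup kleinA).comp (kleinPhi g).toMonoidHom =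
      (MulAut.conj ((zpowersHom KleinBottleGroup kleinB) g)).toMonoidHom.comp
        (zpowersHom KleinBottleGroup kleinA) := by
  intro g
  refine MonoidHom.ext fun y => ?_
  simp only [MonoidHom.comp_apply, MulEquiv.coe_toMonoidHom, MulAut.conj_apply, zpowersHom_apply]
  rw [show kleinPhi g y = kleinPhi (ofAdd (toAdd g)) (ofAdd (toAdd y)) by simp,
    ← klein_conjB_gen (toAdd g) (toAdd y)]

def fromK : KModel →* KleinBottleGroup :=
  SemidirectProduct.lift (zpowersHom _ kleinA) (zpowersHom _ kleinB) fromK_h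

lemma fromK_toK (g : KleinBottleGroup) : fromK (toK g) = g := by
  have h : fromK.comp toK = MonoidHom.id _ := by
    apply PresentedGroup.ext
    intro x
    fin_cases x
    · show fromK (toK kleinA) = kleinA
      rw [toK_A]
      simp [fromK]
    · show fromK (toK kleinB) = kleinB
      rw [toK_B]
      simp [fromK]
  exact DFunLike.congr_fun h g

lemma klein_decomp (g : KleinBottleGroup) :
    g = kleinA ^ (toAdd (toK g).left) * kleinB ^ (toAdd (toK g).right) := by
  conv_lhs => rw [← fromK_toK g, ← inl_left_mul_inr_right (toK g)]
  rw [map_mul]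
  simp [fromK]

lemma toK_Apow (z : ℤ) : toK (kleinA ^ z) = inl (ofAdd z) := by
  rw [map_zpow, toK_A, ← map_zpow inl]
  congr 1
  rw [← ofAdd_zsmul]
  norm_num

lemma toK_Bpow (z : ℤ) : toK (kleinB ^ z) = inr (ofAdd z) := by
  rw [map_zpow, toK_B, ← map_zpow inr]
  congr 1
  rw [← ofAdd_zsmul]
  norm_num

lemma kleinA_zpow_eq_one {z : ℤ} (h : kleinA ^ z = 1) : z = 0 := by
  have := congrArg toK h
  rw [toK_Apow, map_one] at this
  have h2 : (ofAdd z : Multiplicative ℤ) = 1 := inl_injective (by simpa using this)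
  simpa using h2

lemma kleinA_sq_ne_one : kleinA ^ (2:ℤ) ≠ 1 := by
  intro h
  have := kleinA_zpow_eq_one h
  norm_num at this

def rK : KleinBottleGroup →* Multiplicative ℤ := rightHom.comp toK

lemma rK_apply (g : KleinBottleGroup) : rK g = (toK g).right := rfl

lemma j_eq_one {x g : KleinBottleGroup} {j : ℤ} (hn0 : toAdd (toK x).right ≠ 0)
    (hj : x ^ j = g * x * g⁻¹) : j = 1 := by
  have h : rK (x ^ j) = rK (g * x * g⁻¹) := by rw [hj]
  rw [map_zpow, map_mul, map_mul, map_inv, mul_comm (rK g) (rK x), mul_assoc,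
    mul_inv_cancel, mul_one] at h
  have h2 : j * toAdd (toK x).right = toAdd (toK x).right := by
    have := congrArg toAdd h
    rw [toAdd_zpow] at this
    simpa [rK_apply, smul_eq_mul] using this
  have := mul_right_cancel₀ hn0 (h2.trans (one_mul _).symm)
  exact this


/-- Every cyclic normal subgroup of the Klein bottle group is trivial, equal to `⟨aᵏ⟩`
for some positive `k`, or equal to `⟨b^(2k)⟩` for some positive `k`. -/
theorem cyclic_normal_subgroup_of_kleinBottleGroup
    (N : Subgroup KleinBottleGroup) (hnormal : N.Normal)
    (hcyclic : ∃ x : KleinBottleGroup, N = Subgroup.zpowers x) :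
    N = ⊥ ∨ (∃ k : ℕ, 0 < k ∧ N = Subgroup.zpowers (kleinA ^ k)) ∨
      (∃ k : ℕ, 0 < k ∧ N = Subgroup.zpowers (kleinB ^ (2 * k))) := by
  obtain ⟨x, rfl⟩ := hcyclic
  set l : ℤ := toAdd (toK x).left with hl
  set n : ℤ := toAdd (toK x).right with hn
  have hx : x = kleinA ^ l * kleinB ^ n := klein_decomp x
  by_cases hn0 : n = 0
  · have hx' : x = kleinA ^ l := by rw [hx, hn0, zpow_zero, mul_one]
    by_cases hl0 : l = 0
    · left
      rw [hx', hl0, zpow_zero, Subgroup.zpowers_one_eq_bot]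
    · right; left
      refine ⟨l.natAbs, Int.natAbs_pos.mpr hl0, ?_⟩
      rw [hx']
      rcases Int.natAbs_eq l with h | h
      · conv_lhs => rw [h, zpow_natCast]
      · conv_lhs => rw [h, zpow_neg, zpow_natCast]
        rw [Subgroup.zpowers_inv]
  · have hxx : x ∈ Subgroup.zpowers x := Subgroup.mem_zpowers x
    -- conjugation by B forces l = 0
    obtain ⟨j, hj⟩ := Subgroup.mem_zpowers_iff.mp (hnormal.conj_mem x hxx kleinB)
    rw [j_eq_one hn0 hj, zpow_one] at hj
    have hconjx : kleinB * x * kleinB⁻¹ = kleinA ^ (-l) * kleinB ^ n := by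
      rw [hx]
      have hBn : kleinB * kleinB ^ n * kleinB⁻¹ = kleinB ^ n := by group
      calc kleinB * (kleinA ^ l * kleinB ^ n) * kleinB⁻¹
          = (kleinB * kleinA ^ l * kleinB⁻¹) * (kleinB * kleinB ^ n * kleinB⁻¹) := by group
        _ = kleinA ^ (-l) * kleinB ^ n := by rw [klein_conjB, hBn]
    have hll : kleinA ^ l = kleinA ^ (-l) := by
      have h3 := hj.trans hconjx
      rw [hx] at h3
      exact mul_right_cancel h3
    have hl0 : l = 0 := by
      have h2 : kleinA ^ (l + l) = 1 := by
        rw [zpow_add]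
        nth_rewrite 1 [hll]
        rw [← zpow_add]
        simp
      have := kleinA_zpow_eq_one h2
      omega
    have hx2 : x = kleinB ^ n := by rw [hx, hl0, zpow_zero, one_mul]
    -- conjugation by A forces commutation
    obtain ⟨j2, hj2⟩ := Subgroup.mem_zpowers_iff.mp (hnormal.conj_mem x hxx kleinA)
    rw [j_eq_one hn0 hj2, zpow_one] at hj2
    have hcomm : kleinA * x = x * kleinA := by
      have h4 := hj2.symm
      rwa [mul_inv_eq_iff_eq_mul] at h4
    rcases Int.even_or_odd n with ⟨m, hm⟩ | ⟨m, hm⟩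
    · right; right
      have hm0 : m ≠ 0 := by omega
      refine ⟨m.natAbs, Int.natAbs_pos.mpr hm0, ?_⟩
      have hx3 : x = kleinB ^ (2 * m) := by rw [hx2, hm, two_mul]
      rw [hx3]
      rcases Int.natAbs_eq m with h | h
      · conv_lhs => rw [h]
        rw [show (2 * (m.natAbs : ℤ)) = ((2 * m.natAbs : ℕ) : ℤ) by push_cast; ring,
          zpow_natCast]
      · conv_lhs => rw [h]
        rw [show (2 * (-(m.natAbs : ℤ))) = -((2 * m.natAbs : ℕ) : ℤ) by push_cast; ring,
          zpow_neg, zpow_natCast, Subgroup.zpowers_inv]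
    · exfalso
      -- n = 2m + 1 : derive A² = 1
      have hBA : kleinB * kleinA = kleinA⁻¹ * kleinB := by
        rw [← klein_BAB]; group
      have hc2 : Commute kleinA⁻¹ (kleinB ^ (2 * m)) := by
        have := klein_comm2.zpow_right m
        rw [← zpow_mul] at this
        exact this.inv_left
      have hBnA : kleinB ^ n * kleinA = kleinA⁻¹ * kleinB ^ n := by
        calc kleinB ^ n * kleinA = kleinB ^ (2 * m) * (kleinB * kleinA) := by
              rw [hm, zpow_add, zpow_one, two_mul, mul_assoc]
          _ = kleinB ^ (2 * m) * kleinA⁻¹ * kleinB := by rw [hBA, mul_assoc]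
          _ = kleinA⁻¹ * kleinB ^ (2 * m) * kleinB := by rw [hc2.eq]
          _ = kleinA⁻¹ * kleinB ^ n := by rw [hm, two_mul]; group
      have hAA : kleinA = kleinA⁻¹ := by
        have h1 : kleinA * kleinB ^ n = kleinA⁻¹ * kleinB ^ n := by
          rw [← hx2] at hBnA ⊢
          rw [← hcomm] at hBnA
          exact hBnA
        exact mul_right_cancel h1
      apply kleinA_sq_ne_one
      rw [show (2:ℤ) = 1 + 1 by norm_num, zpow_add, zpow_one]
      nth_rewrite 2 [hAA]
      simp
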